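/- Let p ∈ (0,1) and δ > 0. Let X₁,…,Xₙ ∈ {0,1} be random variables such that for every i ∈ [n] and every a₁,…,a_{i-1} ∈ {0,1} with ∑_{t<i} aₜ < (1+δ)·p·n, we have Pr[Xᵢ = 1 | X₁=a₁,…,X_{i-1}=a_{i-1}] ≤ p. Let X = ∑ᵢ Xᵢ. Then Pr[X ≥ (1+δ)·p·n] ≤ 2·exp(−(δ²/(2+δ))·p·n). -/

import Mathlib

open Finset

open Classical in
noncomputable def prob {Ω : Type*} [Fintype Ω] (μ : Ω → ℝ) (E : Set Ω) : ℝ :=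
  ∑ ω, if ω ∈ E then μ ω else 0

lemma aux_deriv_nonneg (x : ℝ) : 0 ≤ 1 + (x - 1) * Real.exp x := by
  have h := Real.add_one_le_exp (-x)
  have hmul : Real.exp (-x) * Real.exp x = 1 := by
    rw [← Real.exp_add]; simp
  nlinarith [Real.exp_pos x, mul_le_mul_of_nonneg_right h (Real.exp_pos x).le]

lemma aux_exp (t : ℝ) (ht : 0 ≤ t) : (2 - t) * Real.exp t ≤ 2 + t := by
  have hd : ∀ x : ℝ, HasDerivAt (fun y => 2 + y - (2 - y) * Real.exp y)
      (1 + (x - 1) * Real.exp x) x := by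
    intro x
    have h1 : HasDerivAt (fun y : ℝ => 2 + y) 1 x := by
      simpa using (hasDerivAt_id x).const_add 2
    have h2 : HasDerivAt (fun y : ℝ => (2 - y) * Real.exp y)
        ((-1) * Real.exp x + (2 - x) * Real.exp x) x :=
      ((hasDerivAt_id x).const_sub 2).mul (Real.hasDerivAt_exp x)
    have := h1.sub h2
    exact this.congr_deriv (by ring)
  have mono : MonotoneOn (fun y : ℝ => 2 + y - (2 - y) * Real.exp y) (Set.Ici 0) := by
    apply monotoneOn_of_deriv_nonneg (convex_Ici 0)
    · exact fun x _ => ((hd x).continuousAt).continuousWithinAt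
    · intro x _
      exact (hd x).differentiableAt.differentiableWithinAt
    · intro x _
      rw [(hd x).deriv]
      exact aux_deriv_nonneg x
  have h0 : (fun y : ℝ => 2 + y - (2 - y) * Real.exp y) 0 = 0 := by simp
  have := mono (Set.self_mem_Ici) (Set.mem_Ici.mpr ht) ht
  simp only [h0] at this
  linarith

lemma aux_log (x : ℝ) (hx : 0 ≤ x) : 2 * x / (2 + x) ≤ Real.log (1 + x) := by
  set t : ℝ := 2 * x / (2 + x) with hts
  have h2x : (0:ℝ) < 2 + x := by linarith
  have ht0 : 0 ≤ t := by positivity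
  have key := aux_exp t ht0
  have h2t : (2 : ℝ) - t = 4 / (2 + x) := by
    rw [hts]; field_simp; ring
  have h2t' : (0:ℝ) < 2 - t := by rw [h2t]; positivity
  have hexp : Real.exp t ≤ 1 + x := by
    have h1 : Real.exp t ≤ (2 + t) / (2 - t) := by
      rw [le_div_iff₀ h2t']
      linarith [key]
    refine h1.trans (le_of_eq ?_)
    rw [h2t, hts]
    field_simp
    ring
  have h1x : (0:ℝ) < 1 + x := by linarith
  exact (Real.le_log_iff_exp_le h1x).mpr hexp

lemma aux_exponent (δ : ℝ) (hδ : 0 < δ) : δ ^ 2 / (2 + δ) ≤ (1 + δ) * Real.log (1 + δ) - δ := by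
  have h := aux_log δ hδ.le
  have h2 : (0:ℝ) < 2 + δ := by linarith
  have heq : (1 + δ) * (2 * δ / (2 + δ)) - δ = δ ^ 2 / (2 + δ) := by
    field_simp; ring
  nlinarith [mul_le_mul_of_nonneg_left h (by linarith : (0:ℝ) ≤ 1 + δ)]

set_option maxHeartbeats 1000000 in
theorem chernoff_conditionally_bounded
    {Ω : Type*} [Fintype Ω] (μ : Ω → ℝ)
    (hμ0 : ∀ ω, 0 ≤ μ ω) (hμ1 : ∑ ω, μ ω = 1)
    {n : ℕ} (p δ : ℝ) (hp0 : 0 < p) (hp1 : p < 1) (hδ : 0 < δ)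
    (X : Fin n → Ω → Bool)
    (hcond : ∀ (i : Fin n) (a : Fin n → Bool),
      ((∑ t ∈ Finset.univ.filter (fun t => t < i), (if a t then (1:ℝ) else 0))
          < (1 + δ) * p * n) →
      prob μ {ω | X i ω = true ∧ ∀ t, t < i → X t ω = a t}
        ≤ p * prob μ {ω | ∀ t, t < i → X t ω = a t}) :
    prob μ {ω | (1 + δ) * p * n ≤ ∑ i, (if X i ω then (1:ℝ) else 0)}
      ≤ 2 * Real.exp (-(δ ^ 2 / (2 + δ)) * p * n) := by
  classical
  set τ : ℝ := (1 + δ) * p * n with hτdef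
  set m : ℕ := ⌈τ⌉₊ with hmdef
  set lam : ℝ := Real.log (1 + δ) with hlamdef
  have hδ1 : (0:ℝ) < 1 + δ := by linarith
  have hlam0 : 0 < lam := Real.log_pos (by linarith)
  have hexplam : Real.exp lam = 1 + δ := Real.exp_log hδ1
  set S : ℕ → Ω → ℕ := fun i ω =>
    ∑ t ∈ Finset.univ.filter (fun t : Fin n => (t : ℕ) < i), (if X t ω then 1 else 0) with hSdef
  set F : ℕ → ℝ := fun i => ∑ ω, μ ω * Real.exp (lam * (min (S i ω) m : ℕ)) with hFdef
  have hF0 : F 0 = 1 := by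
    rw [hFdef, ← hμ1]
    apply Finset.sum_congr rfl
    intro ω _
    have : S 0 ω = 0 := by simp [hSdef]
    rw [this]
    simp
  -- the key inductive step
  have hstep : ∀ i, i < n → F (i + 1) ≤ (1 + p * δ) * F i := by
    intro i hi
    set I : Fin n := ⟨i, hi⟩ with hIdef
    have hSrec : ∀ ω, S (i+1) ω = S i ω + (if X I ω then 1 else 0) := by
      intro ω
      have hnot : I ∉ Finset.univ.filter (fun t : Fin n => (t:ℕ) < i) := by
        simp [hIdef]
      have hfil : Finset.univ.filter (fun t : Fin n => (t:ℕ) < i + 1)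
          = insert I (Finset.univ.filter (fun t : Fin n => (t:ℕ) < i)) := by
        ext t
        simp only [Finset.mem_insert, Finset.mem_filter, Finset.mem_univ, true_and]
        constructor
        · intro h
          rcases Nat.lt_succ_iff_lt_or_eq.mp h with h | h
          · right; exact h
          · left; exact Fin.ext h
        · rintro (h | h)
          · rw [h]; simp [hIdef]
          · omega
      simp only [hSdef, hfil, Finset.sum_insert hnot]
      omega
    have hZrec : ∀ ω, min (S (i+1) ω) m
        = min (S i ω) m + (if S i ω < m ∧ X I ω = true then 1 else 0) := by
      intro ω
      rw [hSrec ω]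
      cases hXb : X I ω <;> simp [hXb] <;> split_ifs <;> omega
    have hpoint : ∀ ω, μ ω * Real.exp (lam * (min (S (i+1) ω) m : ℕ))
        = μ ω * Real.exp (lam * (min (S i ω) m : ℕ))
          + (Real.exp lam - 1) *
            (if S i ω < m ∧ X I ω = true then μ ω * Real.exp (lam * (min (S i ω) m : ℕ)) else 0) := by
      intro ω
      rw [hZrec ω]
      by_cases h : S i ω < m ∧ X I ω = true
      · rw [if_pos h, if_pos h]
        push_cast
        rw [mul_add, Real.exp_add]
        ring
      · rw [if_neg h, if_neg h]
        simp
    set G : ℝ := ∑ ω, (if S i ω < m ∧ X I ω = true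
        then μ ω * Real.exp (lam * (min (S i ω) m : ℕ)) else 0) with hGdef
    have hFsplit : F (i+1) = F i + (Real.exp lam - 1) * G := by
      rw [hFdef, hGdef]
      simp only [hpoint]
      rw [Finset.sum_add_distrib, Finset.mul_sum]
    -- grouping by histories
    set H : Ω → (Fin n → Bool) := fun ω t => if (t:ℕ) < i then X t ω else false with hHdef
    have hGle : G ≤ p * F i := by
      have hGfib : G = ∑ a : Fin n → Bool, ∑ ω ∈ Finset.univ.filter (fun ω => H ω = a),
          (if S i ω < m ∧ X I ω = true then μ ω * Real.exp (lam * (min (S i ω) m : ℕ)) else 0) :=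
        (Finset.sum_fiberwise _ _ _).symm
      have hFfib : F i = ∑ a : Fin n → Bool, ∑ ω ∈ Finset.univ.filter (fun ω => H ω = a),
          μ ω * Real.exp (lam * (min (S i ω) m : ℕ)) :=
        (Finset.sum_fiberwise _ _ _).symm
      rw [hGfib, hFfib, Finset.mul_sum]
      apply Finset.sum_le_sum
      intro a _
      -- per-history bound
      set sa : ℕ := ∑ t ∈ Finset.univ.filter (fun t : Fin n => (t:ℕ) < i),
        (if a t then 1 else 0) with hsadef
      have hfibS : ∀ ω, H ω = a → S i ω = sa := by
        intro ω hω
        rw [hSdef, hsadef]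
        apply Finset.sum_congr rfl
        intro t ht
        have ht' : (t:ℕ) < i := (Finset.mem_filter.mp ht).2
        have := congrFun hω t
        simp only [hHdef, if_pos ht'] at this
        rw [this]
      by_cases hcanon : ∀ t : Fin n, ¬((t:ℕ) < i) → a t = false
      · by_cases hsm : sa < m
        · -- main case: apply hcond
          have hfiber_iff : ∀ ω, (H ω = a) ↔ (∀ t, t < I → X t ω = a t) := by
            intro ω
            constructor
            · intro h t ht
              have ht' : (t:ℕ) < i := ht
              have := congrFun h t
              simpa only [hHdef, if_pos ht'] using this
            · intro h
              funext t
              by_cases ht : (t:ℕ) < i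
              · simp only [hHdef, if_pos ht]
                exact h t ht
              · simp only [hHdef, if_neg ht]
                exact (hcanon t ht).symm
          have hsa_lt : (sa : ℝ) < τ := by
            rw [hmdef] at hsm
            exact_mod_cast Nat.lt_ceil.mp hsm
          have hsum_eq : (∑ t ∈ Finset.univ.filter (fun t => t < I), (if a t then (1:ℝ) else 0))
              = (sa : ℝ) := by
            have hfe : Finset.univ.filter (fun t : Fin n => t < I)
                = Finset.univ.filter (fun t : Fin n => (t:ℕ) < i) := by
              ext t; simp [Fin.lt_def, hIdef]
            rw [hfe, hsadef]
            push_cast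
            rfl
          have hc := hcond I a (by rw [hsum_eq]; exact hsa_lt)
          -- convert prob to fiber sums
          have hE2 : prob μ {ω | ∀ t, t < I → X t ω = a t}
              = ∑ ω ∈ Finset.univ.filter (fun ω => H ω = a), μ ω := by
            rw [prob, Finset.sum_filter]
            apply Finset.sum_congr rfl
            intro ω _
            simp only [Set.mem_setOf_eq]
            by_cases hH : H ω = a
            · rw [if_pos hH, if_pos ((hfiber_iff ω).mp hH)]
            · rw [if_neg hH, if_neg (fun hmem => hH ((hfiber_iff ω).mpr hmem))]
          have hE1 : prob μ {ω | X I ω = true ∧ ∀ t, t < I → X t ω = a t}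
              = ∑ ω ∈ Finset.univ.filter (fun ω => H ω = a), (if X I ω = true then μ ω else 0) := by
            rw [prob, Finset.sum_filter]
            apply Finset.sum_congr rfl
            intro ω _
            by_cases hH : H ω = a
            · rw [if_pos hH]
              by_cases hX : X I ω = true
              · rw [if_pos hX, if_pos ⟨hX, (hfiber_iff ω).mp hH⟩]
              · rw [if_neg hX, if_neg (fun hmem => hX hmem.1)]
            · rw [if_neg hH, if_neg (by
                intro hmem
                exact hH ((hfiber_iff ω).mpr hmem.2))]
          -- rewrite LHS
          have hLHS : ∑ ω ∈ Finset.univ.filter (fun ω => H ω = a),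
              (if S i ω < m ∧ X I ω = true then μ ω * Real.exp (lam * (min (S i ω) m : ℕ)) else 0)
              = Real.exp (lam * (sa : ℕ)) *
                ∑ ω ∈ Finset.univ.filter (fun ω => H ω = a), (if X I ω = true then μ ω else 0) := by
            rw [Finset.mul_sum]
            apply Finset.sum_congr rfl
            intro ω hω
            have hS' : S i ω = sa := hfibS ω (Finset.mem_filter.mp hω).2
            have hmin : min (S i ω) m = sa := by rw [hS']; exact min_eq_left hsm.le
            by_cases hX : X I ω = true
            · rw [if_pos ⟨by rw [hS']; exact hsm, hX⟩, if_pos hX, hmin]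
              ring
            · rw [if_neg (by tauto), if_neg hX]
              ring
          have hRHS : ∑ ω ∈ Finset.univ.filter (fun ω => H ω = a),
              μ ω * Real.exp (lam * (min (S i ω) m : ℕ))
              = Real.exp (lam * (sa : ℕ)) *
                ∑ ω ∈ Finset.univ.filter (fun ω => H ω = a), μ ω := by
            rw [Finset.mul_sum]
            apply Finset.sum_congr rfl
            intro ω hω
            have hS' : S i ω = sa := hfibS ω (Finset.mem_filter.mp hω).2
            have hmin : min (S i ω) m = sa := by rw [hS']; exact min_eq_left hsm.le
            rw [hmin]; ring
          rw [hLHS, hRHS, ← hE1, ← hE2]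
          calc Real.exp (lam * (sa:ℕ)) * prob μ {ω | X I ω = true ∧ ∀ t, t < I → X t ω = a t}
              ≤ Real.exp (lam * (sa:ℕ)) * (p * prob μ {ω | ∀ t, t < I → X t ω = a t}) :=
                mul_le_mul_of_nonneg_left hc (Real.exp_pos _).le
            _ = p * (Real.exp (lam * (sa:ℕ)) * prob μ {ω | ∀ t, t < I → X t ω = a t}) := by ring
        · -- sa ≥ m : LHS terms all vanish
          have hzero : ∀ ω ∈ Finset.univ.filter (fun ω => H ω = a),
              (if S i ω < m ∧ X I ω = true then μ ω * Real.exp (lam * (min (S i ω) m : ℕ)) else 0)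
                = 0 := by
            intro ω hω
            have hS' : S i ω = sa := hfibS ω (Finset.mem_filter.mp hω).2
            rw [if_neg (by rw [hS']; tauto)]
          rw [Finset.sum_eq_zero hzero]
          have : (0:ℝ) ≤ ∑ ω ∈ Finset.univ.filter (fun ω => H ω = a),
              μ ω * Real.exp (lam * (min (S i ω) m : ℕ)) :=
            Finset.sum_nonneg fun ω _ => mul_nonneg (hμ0 ω) (Real.exp_pos _).le
          positivity
      · -- non-canonical history: empty fiber
        have hempty : Finset.univ.filter (fun ω => H ω = a) = ∅ := by
          ext ω
          simp only [Finset.mem_filter, Finset.mem_univ, true_and, Finset.notMem_empty,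
            iff_false]
          intro hω
          push_neg at hcanon
          obtain ⟨t, ht, hat⟩ := hcanon
          have h2 := congrFun hω t
          simp only [hHdef] at h2
          rw [if_neg (by omega)] at h2
          exact hat h2.symm
        rw [hempty]
        simp
    -- conclude the step
    have hFnonneg : 0 ≤ F i := by
      rw [hFdef]
      exact Finset.sum_nonneg fun ω _ => mul_nonneg (hμ0 ω) (Real.exp_pos _).le
    have hlam1 : Real.exp lam - 1 = δ := by rw [hexplam]; ring
    rw [hFsplit, hlam1]
    nlinarith [hGle]
  -- F n ≤ (1 + p δ)^n
  have hFn : ∀ j, j ≤ n → F j ≤ (1 + p * δ) ^ j := by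
    intro j
    induction j with
    | zero => intro _; rw [hF0]; simp
    | succ k ih =>
      intro hk
      have h1 : 0 ≤ 1 + p * δ := by nlinarith
      calc F (k+1) ≤ (1 + p * δ) * F k := hstep k (by omega)
        _ ≤ (1 + p * δ) * (1 + p * δ) ^ k :=
            mul_le_mul_of_nonneg_left (ih (by omega)) h1
        _ = (1 + p * δ) ^ (k+1) := by ring
  -- Markov
  have hmark : prob μ {ω | τ ≤ ∑ i, (if X i ω then (1:ℝ) else 0)}
      ≤ Real.exp (-(lam * m)) * F n := by
    rw [prob, hFdef, Finset.mul_sum]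
    apply Finset.sum_le_sum
    intro ω _
    by_cases hω : ω ∈ {ω | τ ≤ ∑ i, (if X i ω then (1:ℝ) else 0)}
    · rw [if_pos hω]
      have hsum : (S n ω : ℝ) = ∑ i : Fin n, (if X i ω then (1:ℝ) else 0) := by
        have h1 : Finset.univ.filter (fun t : Fin n => (t:ℕ) < n) = Finset.univ := by
          apply Finset.filter_true_of_mem
          intro t _
          exact t.isLt
        simp only [hSdef, h1]
        push_cast
        rfl
      have hge : m ≤ S n ω := by
        rw [hmdef]
        apply Nat.ceil_le.mpr
        rw [hsum]
        exact hω
      have hminm : min (S n ω) m = m := min_eq_right hge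
      rw [hminm]
      have : Real.exp (-(lam * m)) * (μ ω * Real.exp (lam * m)) = μ ω := by
        rw [mul_comm (μ ω) _, ← mul_assoc, ← Real.exp_add]
        simp
      rw [this]
    · rw [if_neg hω]
      have := hμ0 ω
      positivity
  -- conclude
  have hτm : τ ≤ (m : ℝ) := Nat.le_ceil τ
  have hτ0 : 0 ≤ τ := by
    rw [hτdef]; positivity
  have hchain : Real.exp (-(lam * m)) * F n ≤ Real.exp (-(lam * τ)) * Real.exp (p * δ * n) := by
    have h1 : Real.exp (-(lam * m)) ≤ Real.exp (-(lam * τ)) := by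
      apply Real.exp_le_exp.mpr
      nlinarith
    have h2 : F n ≤ Real.exp (p * δ * n) := by
      refine (hFn n le_rfl).trans ?_
      have h3 : (1 + p * δ) ^ n ≤ (Real.exp (p * δ)) ^ n := by
        apply pow_le_pow_left₀ (by nlinarith) (by linarith [Real.add_one_le_exp (p * δ)])
      refine h3.trans (le_of_eq ?_)
      rw [← Real.exp_nat_mul]
      ring_nf
    have hF0' : 0 ≤ F n := by
      rw [hFdef]
      exact Finset.sum_nonneg fun ω _ => mul_nonneg (hμ0 ω) (Real.exp_pos _).le
    exact mul_le_mul h1 h2 hF0' (Real.exp_pos _).le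
  have hfinal : Real.exp (-(lam * τ)) * Real.exp (p * δ * n)
      ≤ Real.exp (-(δ ^ 2 / (2 + δ)) * p * n) := by
    rw [← Real.exp_add]
    apply Real.exp_le_exp.mpr
    have hexpo := aux_exponent δ hδ
    have hpn : (0:ℝ) ≤ p * n := by positivity
    have : -(lam * τ) + p * δ * n = (δ - (1 + δ) * lam) * (p * n) := by
      rw [hτdef]; ring
    rw [this]
    have h2 : -(δ ^ 2 / (2 + δ)) * p * n = (-(δ ^ 2 / (2 + δ))) * (p * n) := by ring
    rw [h2]
    apply mul_le_mul_of_nonneg_right _ hpn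
    linarith [hexpo]
  calc prob μ {ω | τ ≤ ∑ i, (if X i ω then (1:ℝ) else 0)}
      ≤ Real.exp (-(lam * m)) * F n := hmark
    _ ≤ Real.exp (-(lam * τ)) * Real.exp (p * δ * n) := hchain
    _ ≤ Real.exp (-(δ ^ 2 / (2 + δ)) * p * n) := hfinal
    _ ≤ 2 * Real.exp (-(δ ^ 2 / (2 + δ)) * p * n) := by
        linarith [Real.exp_pos (-(δ ^ 2 / (2 + δ)) * p * n)]
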